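/- Let m ≥ 2 and n ≥ 1. Suppose A ∈ ℝ^{[m,n]} is a nonsingular M-tensor, b ∈ ℝⁿ is a positive vector, τ₀ > 0, and x : ℝ → ℝⁿ is differentiable on [0, 1+τ₀) with x(t) positive and (t A + (1−t) I) x(t)^{m-1} = b for every t ∈ [0, 1+τ₀). Then for every t ∈ [0, 1+τ₀) the derivative x′(t) satisfies the linear system (m−1)·((t Â + (1−t) I) x(t)^{m-2}) x′(t) = −(A − I) x(t)^{m-1}, where Â is the partial symmetrization of A. -/

import Mathlib

/-!
We model an `m`-th order, `n`-dimensional real tensor with `m = k + 2` (so `m ≥ 2`)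
as a map `Fin n → (Fin (k+1) → Fin n) → ℝ`: the first index, followed by the
`m - 1 = k + 1` trailing indices.
-/

noncomputable section

/-- The vector `A x^{m-1}`. -/
def tvec (n k : ℕ) (A : Fin n → (Fin (k + 1) → Fin n) → ℝ) (x : Fin n → ℝ) :
    Fin n → ℝ :=
  fun i => ∑ g : Fin (k + 1) → Fin n, A i g * ∏ j, x (g j)

/-- The `n × n` matrix `A x^{m-2}`, with `(i,j)` entry
`∑_{i₃,…,i_m} A_{i j i₃ ⋯ i_m} x_{i₃} ⋯ x_{i_m}`. -/
def tmat (n k : ℕ) (A : Fin n → (Fin (k + 1) → Fin n) → ℝ) (x : Fin n → ℝ) :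
    Matrix (Fin n) (Fin n) ℝ :=
  fun i j => ∑ h : Fin k → Fin n, A i (Fin.cons j h) * ∏ l, x (h l)

/-- The identity tensor `I`: entries `1` when all indices coincide, `0` otherwise. -/
def idT (n k : ℕ) : Fin n → (Fin (k + 1) → Fin n) → ℝ :=
  fun i g => if ∀ j, g j = i then 1 else 0

/-- `lam ∈ ℂ` is an eigenvalue of the tensor `B`: `B x^{m-1} = lam * x^{[m-1]}` for some
nonzero complex vector `x`. -/
def IsEig (n k : ℕ) (B : Fin n → (Fin (k + 1) → Fin n) → ℝ) (lam : ℂ) : Prop :=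
  ∃ x : Fin n → ℂ, x ≠ 0 ∧
    ∀ i, ∑ g : Fin (k + 1) → Fin n, (B i g : ℂ) * ∏ j, x (g j) = lam * (x i) ^ (k + 1)

/-- The spectral radius of a tensor: supremum of moduli of its eigenvalues. -/
def specRad (n k : ℕ) (B : Fin n → (Fin (k + 1) → Fin n) → ℝ) : ℝ :=
  sSup {r : ℝ | ∃ lam : ℂ, IsEig n k B lam ∧ r = ‖lam‖}

/-- A tensor is nonnegative if all its entries are nonnegative. -/
def NonnegT (n k : ℕ) (B : Fin n → (Fin (k + 1) → Fin n) → ℝ) : Prop :=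
  ∀ i g, 0 ≤ B i g

/-- `A` is a nonsingular M-tensor: `A = s I - B` with `B` nonnegative and `s > ρ(B)`. -/
def IsNsMTensor (n k : ℕ) (A : Fin n → (Fin (k + 1) → Fin n) → ℝ) : Prop :=
  ∃ s : ℝ, ∃ B : Fin n → (Fin (k + 1) → Fin n) → ℝ,
    NonnegT n k B ∧ specRad n k B < s ∧
    A = fun i g => s * idT n k i g - B i g

/-- The partial symmetrization `Â` of `A` over the trailing `m - 1` indices. -/
def psym (n k : ℕ) (A : Fin n → (Fin (k + 1) → Fin n) → ℝ) :
    Fin n → (Fin (k + 1) → Fin n) → ℝ :=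
  fun i g => (1 / (Nat.factorial (k + 1) : ℝ)) *
    ∑ π : Equiv.Perm (Fin (k + 1)), A i (g ∘ π)

end

open Finset

private lemma erase_prod_eq {n k : ℕ} (x : Fin n → ℝ) (hx : ∀ i, x i ≠ 0)
    (g : Fin (k+1) → Fin n) (j : Fin (k+1)) :
    ∏ l ∈ Finset.univ.erase j, x (g l) = (∏ l, x (g l)) / x (g j) := by
  rw [eq_div_iff (hx _), mul_comm]
  exact Finset.mul_prod_erase Finset.univ (fun l => x (g l)) (Finset.mem_univ j)

private lemma T_comp_perm {n k : ℕ} (x y : Fin n → ℝ) (hx : ∀ i, x i ≠ 0)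
    (g : Fin (k+1) → Fin n) (π : Equiv.Perm (Fin (k+1))) :
    ∑ j, (∏ l ∈ Finset.univ.erase j, x ((g ∘ ⇑π) l)) * y ((g ∘ ⇑π) j)
      = ∑ j, (∏ l ∈ Finset.univ.erase j, x (g l)) * y (g j) := by
  have h1 : ∀ (g : Fin (k+1) → Fin n),
      ∑ j, (∏ l ∈ Finset.univ.erase j, x (g l)) * y (g j)
        = ∑ j, ((∏ l, x (g l)) / x (g j)) * y (g j) := by
    intro g; exact Finset.sum_congr rfl fun j _ => by rw [erase_prod_eq x hx]
  rw [h1, h1]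
  simp only [Function.comp_apply]
  calc ∑ j, ((∏ l, x (g (π l))) / x (g (π j))) * y (g (π j))
      = ∑ j, ((∏ l, x (g l)) / x (g (π j))) * y (g (π j)) := by
        rw [Equiv.prod_comp π (fun l => x (g l))]
    _ = ∑ j, ((∏ l, x (g l)) / x (g j)) * y (g j) :=
        Equiv.sum_comp π (fun j => ((∏ l, x (g l)) / x (g j)) * y (g j))

private lemma perm_sum_comp {n k : ℕ} (D : (Fin (k+1) → Fin n) → ℝ) (g : Fin (k+1) → Fin n)
    (σ : Equiv.Perm (Fin (k+1))) :
    ∑ π : Equiv.Perm (Fin (k+1)), D ((g ∘ ⇑σ) ∘ ⇑π) = ∑ π : Equiv.Perm (Fin (k+1)), D (g ∘ ⇑π) := by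
  apply Fintype.sum_equiv (Equiv.mulLeft σ)
  intro π
  congr 1

private lemma idT_comp {n k : ℕ} (i : Fin n) (g : Fin (k+1) → Fin n)
    (π : Equiv.Perm (Fin (k+1))) :
    idT n k i (g ∘ ⇑π) = idT n k i g := by
  unfold idT
  congr 1
  simp only [eq_iff_iff, Function.comp_apply]
  constructor
  · intro h j
    have := h (π.symm j)
    simpa using this
  · intro h j
    exact h (π j)

private lemma sum_Dhat_eq {n k : ℕ} (D T : (Fin (k+1) → Fin n) → ℝ)
    (hT : ∀ (g : Fin (k+1) → Fin n) (π : Equiv.Perm (Fin (k+1))), T (g ∘ ⇑π) = T g) :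
    ∑ g : Fin (k+1) → Fin n,
        ((1 / (Nat.factorial (k+1) : ℝ)) * ∑ π : Equiv.Perm (Fin (k+1)), D (g ∘ ⇑π)) * T g
      = ∑ g : Fin (k+1) → Fin n, D g * T g := by
  have hfac : ((Nat.factorial (k+1) : ℝ)) ≠ 0 := Nat.cast_ne_zero.2 (Nat.factorial_ne_zero _)
  have hperm : ∀ π : Equiv.Perm (Fin (k+1)),
      ∑ g : Fin (k+1) → Fin n, D (g ∘ ⇑π) * T g = ∑ g : Fin (k+1) → Fin n, D g * T g := by
    intro π
    apply Fintype.sum_equiv (Equiv.arrowCongr π.symm (Equiv.refl (Fin n)))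
    intro g
    have he : (Equiv.arrowCongr π.symm (Equiv.refl (Fin n))) g = g ∘ ⇑π := by
      ext j; simp [Equiv.arrowCongr]
    rw [he, hT g π]
  calc ∑ g : Fin (k+1) → Fin n,
        ((1 / (Nat.factorial (k+1) : ℝ)) * ∑ π : Equiv.Perm (Fin (k+1)), D (g ∘ ⇑π)) * T g
      = (1 / (Nat.factorial (k+1) : ℝ)) *
          ∑ g : Fin (k+1) → Fin n, ∑ π : Equiv.Perm (Fin (k+1)), D (g ∘ ⇑π) * T g := by
        rw [Finset.mul_sum]
        exact Finset.sum_congr rfl fun g _ => by rw [mul_assoc, Finset.sum_mul]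
    _ = (1 / (Nat.factorial (k+1) : ℝ)) *
          ∑ π : Equiv.Perm (Fin (k+1)), ∑ g : Fin (k+1) → Fin n, D (g ∘ ⇑π) * T g := by
        rw [Finset.sum_comm]
    _ = (1 / (Nat.factorial (k+1) : ℝ)) *
          ∑ _π : Equiv.Perm (Fin (k+1)), ∑ g : Fin (k+1) → Fin n, D g * T g := by
        exact congrArg _ (Finset.sum_congr rfl fun π _ => hperm π)
    _ = ∑ g : Fin (k+1) → Fin n, D g * T g := by
        rw [Finset.sum_const, Finset.card_univ, Fintype.card_perm, Fintype.card_fin, nsmul_eq_mul]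
        field_simp

private lemma sym_eval {n k : ℕ} (E : (Fin (k+1) → Fin n) → ℝ)
    (hE : ∀ (g : Fin (k+1) → Fin n) (σ : Equiv.Perm (Fin (k+1))), E (g ∘ ⇑σ) = E g)
    (x y : Fin n → ℝ) (hx : ∀ i, x i ≠ 0) :
    ∑ g : Fin (k+1) → Fin n, E g * ∑ j, (∏ l ∈ Finset.univ.erase j, x (g l)) * y (g j)
      = ((k:ℝ)+1) * ∑ p, (∑ h : Fin k → Fin n, E (Fin.cons p h) * ∏ l, x (h l)) * y p := by
  have key0 : ∀ j : Fin (k+1),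
      ∑ g : Fin (k+1) → Fin n, E g * (((∏ l, x (g l)) / x (g j)) * y (g j))
        = ∑ g : Fin (k+1) → Fin n, E g * (((∏ l, x (g l)) / x (g 0)) * y (g 0)) := by
    intro j
    apply Fintype.sum_equiv
      (Equiv.arrowCongr (Equiv.swap (0 : Fin (k+1)) j).symm (Equiv.refl (Fin n)))
    intro g
    have he : (Equiv.arrowCongr (Equiv.swap (0 : Fin (k+1)) j).symm (Equiv.refl (Fin n))) g
        = g ∘ ⇑(Equiv.swap (0 : Fin (k+1)) j) := by
      ext l; simp [Equiv.arrowCongr]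
    rw [he, hE g]
    simp only [Function.comp_apply, Equiv.swap_apply_left]
    have hP : ∏ l, x (g ((Equiv.swap (0 : Fin (k+1)) j) l)) = ∏ l, x (g l) :=
      Equiv.prod_comp (Equiv.swap (0 : Fin (k+1)) j) (fun l => x (g l))
    rw [hP]
  calc ∑ g : Fin (k+1) → Fin n, E g * ∑ j, (∏ l ∈ Finset.univ.erase j, x (g l)) * y (g j)
      = ∑ g : Fin (k+1) → Fin n, ∑ j, E g * (((∏ l, x (g l)) / x (g j)) * y (g j)) := by
        refine Finset.sum_congr rfl fun g _ => ?_
        rw [Finset.mul_sum]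
        exact Finset.sum_congr rfl fun j _ => by rw [erase_prod_eq x hx]
    _ = ∑ j, ∑ g : Fin (k+1) → Fin n, E g * (((∏ l, x (g l)) / x (g j)) * y (g j)) :=
        Finset.sum_comm
    _ = ∑ _j : Fin (k+1), ∑ g : Fin (k+1) → Fin n,
          E g * (((∏ l, x (g l)) / x (g 0)) * y (g 0)) :=
        Finset.sum_congr rfl fun j _ => key0 j
    _ = ((k:ℝ)+1) * ∑ g : Fin (k+1) → Fin n, E g * (((∏ l, x (g l)) / x (g 0)) * y (g 0)) := by
        rw [Finset.sum_const, Finset.card_univ, Fintype.card_fin, nsmul_eq_mul]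
        push_cast
        ring
    _ = ((k:ℝ)+1) * ∑ p, (∑ h : Fin k → Fin n, E (Fin.cons p h) * ∏ l, x (h l)) * y p := by
        congr 1
        have hdecomp : (∑ q : Fin n × (Fin k → Fin n),
            E (Fin.cons q.1 q.2) *
              (((∏ l, x ((Fin.cons q.1 q.2 : Fin (k+1) → Fin n) l)) / x q.1) * y q.1))
            = ∑ g : Fin (k+1) → Fin n, E g * (((∏ l, x (g l)) / x (g 0)) * y (g 0)) := by
          apply Fintype.sum_equiv (Fin.consEquiv (fun _ : Fin (k+1) => Fin n))
          intro q
          rfl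
        rw [← hdecomp, Fintype.sum_prod_type]
        refine Finset.sum_congr rfl fun p _ => ?_
        rw [Finset.sum_mul]
        refine Finset.sum_congr rfl fun h _ => ?_
        have hP : (∏ l, x ((Fin.cons p h : Fin (k+1) → Fin n) l)) = x p * ∏ l, x (h l) := by
          rw [Fin.prod_univ_succ]
          simp [Fin.cons_zero, Fin.cons_succ]
        rw [hP]
        have : x p ≠ 0 := hx p
        field_simp

/-- If `x(t)` is a differentiable path of positive solutions of the homotopy on
`[0, 1 + τ₀)`, its derivative `x'(t)` satisfies
`(m-1) ((t Â + (1-t) I) x(t)^{m-2}) x'(t) = -(A - I) x(t)^{m-1}`. -/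
theorem homotopy_derivative_equation (k n : ℕ) (hn : 1 ≤ n)
    (A : Fin n → (Fin (k + 1) → Fin n) → ℝ) (hA : IsNsMTensor n k A)
    (b : Fin n → ℝ) (hb : ∀ i, 0 < b i)
    (τ₀ : ℝ) (hτ : 0 < τ₀)
    (x x' : ℝ → (Fin n → ℝ))
    (hdiff : ∀ t ∈ Set.Ico (0 : ℝ) (1 + τ₀),
      HasDerivWithinAt x (x' t) (Set.Ico (0 : ℝ) (1 + τ₀)) t)
    (hx : ∀ t ∈ Set.Ico (0 : ℝ) (1 + τ₀), (∀ i, 0 < x t i) ∧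
      tvec n k (fun i g => t * A i g + (1 - t) * idT n k i g) (x t) = b) :
    ∀ t ∈ Set.Ico (0 : ℝ) (1 + τ₀),
      (((k : ℝ) + 1) •
          tmat n k (fun i g => t * psym n k A i g + (1 - t) * idT n k i g) (x t)).mulVec
          (x' t)
        = -(tvec n k (fun i g => A i g - idT n k i g) (x t)) := by
  intro t ht
  have hxt : ∀ i, 0 < x t i := (hx t ht).1
  have hxne : ∀ i, x t i ≠ 0 := fun i => ne_of_gt (hxt i)
  have hU : UniqueDiffWithinAt ℝ (Set.Ico (0:ℝ) (1+τ₀)) t := uniqueDiffOn_Ico 0 (1+τ₀) t ht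
  have hfac : ((Nat.factorial (k+1) : ℝ)) ≠ 0 := Nat.cast_ne_zero.2 (Nat.factorial_ne_zero _)
  funext i
  have hcomp : ∀ j : Fin n, HasDerivWithinAt (fun u => x u j) (x' t j)
      (Set.Ico (0:ℝ) (1+τ₀)) t := fun j => hasDerivWithinAt_pi.1 (hdiff t ht) j
  have hderiv : HasDerivWithinAt
      (fun u => ∑ g : Fin (k+1) → Fin n,
        (u * A i g + (1-u) * idT n k i g) * ∏ j, x u (g j))
      (∑ g : Fin (k+1) → Fin n,
        ((A i g - idT n k i g) * ∏ j, x t (g j)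
          + (t * A i g + (1-t) * idT n k i g) *
            ∑ j, (∏ l ∈ Finset.univ.erase j, x t (g l)) • x' t (g j)))
      (Set.Ico (0:ℝ) (1+τ₀)) t := by
    apply HasDerivWithinAt.fun_sum
    intro g _
    have hc : HasDerivWithinAt (fun u : ℝ => u * A i g + (1-u) * idT n k i g)
        (A i g - idT n k i g) (Set.Ico (0:ℝ) (1+τ₀)) t := by
      have h := (((hasDerivAt_id t).mul_const (A i g)).add
        (((hasDerivAt_const t (1:ℝ)).sub (hasDerivAt_id t)).mul_const
          (idT n k i g))).hasDerivWithinAt (s := Set.Ico (0:ℝ) (1+τ₀))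
      have he : A i g - idT n k i g = 1 * A i g + (0 - 1) * idT n k i g := by ring
      rw [he]
      exact h
    have hq : HasDerivWithinAt (fun u => ∏ j, x u (g j))
        (∑ j, (∏ l ∈ Finset.univ.erase j, x t (g l)) • x' t (g j))
        (Set.Ico (0:ℝ) (1+τ₀)) t :=
      HasDerivWithinAt.fun_finset_prod (fun j _ => hcomp (g j))
    exact hc.mul hq
  have hFeq : ∀ u ∈ Set.Ico (0:ℝ) (1+τ₀),
      (∑ g : Fin (k+1) → Fin n, (u * A i g + (1-u) * idT n k i g) * ∏ j, x u (g j)) = b i :=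
    fun u hu => congrFun (hx u hu).2 i
  have h0 : HasDerivWithinAt
      (fun u => ∑ g : Fin (k+1) → Fin n, (u * A i g + (1-u) * idT n k i g) * ∏ j, x u (g j))
      0 (Set.Ico (0:ℝ) (1+τ₀)) t :=
    (hasDerivWithinAt_const t _ (b i)).congr hFeq (hFeq t ht)
  have hzero := (hderiv.derivWithin hU).symm.trans (h0.derivWithin hU)
  simp only [smul_eq_mul] at hzero
  rw [Finset.sum_add_distrib] at hzero
  have hkey : ∑ g : Fin (k+1) → Fin n,
      (t * A i g + (1-t) * idT n k i g) *
        ∑ j, (∏ l ∈ Finset.univ.erase j, x t (g l)) * x' t (g j)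
      = -(∑ g : Fin (k+1) → Fin n, (A i g - idT n k i g) * ∏ j, x t (g j)) :=
    eq_neg_of_add_eq_zero_right hzero
  have hE : ∀ (g : Fin (k+1) → Fin n) (σ : Equiv.Perm (Fin (k+1))),
      (fun g => t * psym n k A i g + (1-t) * idT n k i g) (g ∘ ⇑σ)
        = (fun g => t * psym n k A i g + (1-t) * idT n k i g) g := by
    intro g σ
    simp only
    rw [idT_comp]
    congr 2
    simp only [psym]
    congr 1
    exact perm_sum_comp (fun h => A i h) g σ
  have hEeq : ∀ g : Fin (k+1) → Fin n,
      t * psym n k A i g + (1-t) * idT n k i g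
      = (1 / (Nat.factorial (k+1) : ℝ)) * ∑ π : Equiv.Perm (Fin (k+1)),
          (t * A i (g ∘ ⇑π) + (1-t) * idT n k i (g ∘ ⇑π)) := by
    intro g
    have h1 : ∑ π : Equiv.Perm (Fin (k+1)), (t * A i (g ∘ ⇑π) + (1-t) * idT n k i (g ∘ ⇑π))
        = t * (∑ π : Equiv.Perm (Fin (k+1)), A i (g ∘ ⇑π))
          + (1-t) * ((Nat.factorial (k+1) : ℝ) * idT n k i g) := by
      rw [Finset.sum_add_distrib, ← Finset.mul_sum, ← Finset.mul_sum]
      congr 2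
      calc ∑ π : Equiv.Perm (Fin (k+1)), idT n k i (g ∘ ⇑π)
          = ∑ _π : Equiv.Perm (Fin (k+1)), idT n k i g :=
            Finset.sum_congr rfl fun π _ => idT_comp i g π
        _ = (Nat.factorial (k+1) : ℝ) * idT n k i g := by
            rw [Finset.sum_const, Finset.card_univ, Fintype.card_perm, Fintype.card_fin,
              nsmul_eq_mul]
    rw [h1]
    simp only [psym]
    field_simp
  have hLHS : (((k : ℝ) + 1) •
      tmat n k (fun i g => t * psym n k A i g + (1 - t) * idT n k i g) (x t)).mulVec (x' t) i
      = ((k:ℝ)+1) * ∑ p, (∑ h : Fin k → Fin n,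
          (t * psym n k A i (Fin.cons p h) + (1-t) * idT n k i (Fin.cons p h))
            * ∏ l, x t (h l)) * x' t p := by
    simp only [Matrix.mulVec, dotProduct, Matrix.smul_apply, smul_eq_mul, tmat]
    rw [Finset.mul_sum]
    exact Finset.sum_congr rfl fun p _ => by ring
  calc (((k : ℝ) + 1) •
      tmat n k (fun i g => t * psym n k A i g + (1 - t) * idT n k i g) (x t)).mulVec (x' t) i
      = ((k:ℝ)+1) * ∑ p, (∑ h : Fin k → Fin n,
          (t * psym n k A i (Fin.cons p h) + (1-t) * idT n k i (Fin.cons p h))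
            * ∏ l, x t (h l)) * x' t p := hLHS
    _ = ∑ g : Fin (k+1) → Fin n, (t * psym n k A i g + (1-t) * idT n k i g) *
          ∑ j, (∏ l ∈ Finset.univ.erase j, x t (g l)) * x' t (g j) :=
        (sym_eval (fun g => t * psym n k A i g + (1-t) * idT n k i g) hE
          (x t) (x' t) hxne).symm
    _ = ∑ g : Fin (k+1) → Fin n,
          ((1 / (Nat.factorial (k+1) : ℝ)) * ∑ π : Equiv.Perm (Fin (k+1)),
            (t * A i (g ∘ ⇑π) + (1-t) * idT n k i (g ∘ ⇑π))) *
          ∑ j, (∏ l ∈ Finset.univ.erase j, x t (g l)) * x' t (g j) :=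
        Finset.sum_congr rfl fun g _ => by rw [← hEeq g]
    _ = ∑ g : Fin (k+1) → Fin n, (t * A i g + (1-t) * idT n k i g) *
          ∑ j, (∏ l ∈ Finset.univ.erase j, x t (g l)) * x' t (g j) :=
        sum_Dhat_eq (fun g => t * A i g + (1-t) * idT n k i g)
          (fun g => ∑ j, (∏ l ∈ Finset.univ.erase j, x t (g l)) * x' t (g j))
          (fun g π => T_comp_perm (x t) (x' t) hxne g π)
    _ = -(∑ g : Fin (k+1) → Fin n, (A i g - idT n k i g) * ∏ j, x t (g j)) := hkey
    _ = (-(tvec n k (fun i g => A i g - idT n k i g) (x t))) i := rfl
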